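/- arXiv:1009.0479 — 2 statements merged into one kernel-verified Lean document; each statement's English description precedes it below -/
import Mathlib

section
/- Let n = 2m and let S = k[z_{i,j} : 1 ≤ j < i ≤ n, i+j ≤ n+1] be a polynomial ring. Let φ : k[Z_{i,j} : 1 ≤ j < i ≤ n] → S be any k-algebra homomorphism satisfying φ(Z_{i,j}) = z_{i,j} whenever i + j ≤ n + 1. Then for every positive integer d, the monomial ∏_{1 ≤ j < i ≤ n, i+j ≤ n+1} z_{i,j}^d appears with nonzero coefficient in φ(𝔣_n)^d. -/
open MvPolynomial

/-- Evaluation of a multivariate polynomial at `X j = 0` (all other variables kept). -/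
noncomputable def setZero {σ : Type*} [DecidableEq σ] {k : Type*} [Field k] (j : σ) :
    MvPolynomial σ k →ₐ[k] MvPolynomial σ k :=
  aeval (fun i => if i = j then 0 else X i)

/-- `IsRNC g J` : `g` is a residual normal crossing relative to the totally ordered
subset of variables given by the (nodup) list `J`, listed in increasing order. -/
def IsRNC {σ : Type*} [DecidableEq σ] {k : Type*} [Field k] :
    MvPolynomial σ k → List σ → Prop
  | g, [] => ∃ c : k, c ≠ 0 ∧ g = C c
  | g, j :: J => ∃ h : MvPolynomial σ k, g = X j * h ∧ IsRNC (setZero j h) J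

/-- The `(i,j)` entry (1-based indices) of the generic lower unitriangular matrix `Z`,
as a polynomial in the variables `Z_{i,j}`, `j < i` (indexed by the pair `(i,j)`). -/
noncomputable def Zent (k : Type*) [Field k] (i j : ℕ) : MvPolynomial (ℕ × ℕ) k :=
  if i = j then 1 else if j < i then X (i, j) else 0

/-- The minor `v_a` of the generic lower unitriangular matrix with rows the (1-based)
sequence `a` and columns `1, …, s`. -/
noncomputable def vminor (k : Type*) [Field k] {s : ℕ} (a : Fin s → ℕ) :
    MvPolynomial (ℕ × ℕ) k :=
  (Matrix.of fun p q : Fin s => Zent k (a p) ((q : ℕ) + 1)).det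

/-- The polynomial `𝔣_r = ∏_{s=1}^{r} v_{(⌊s/2⌋+1, …, s)}`. -/
noncomputable def fRNC (k : Type*) [Field k] (r : ℕ) : MvPolynomial (ℕ × ℕ) k :=
  ∏ s ∈ Finset.Icc 1 r, vminor k (fun p : Fin (s - s / 2) => s / 2 + 1 + (p : ℕ))

/-- The polynomial `𝔤_r = σ(𝔣_r)`, where `σ` is the variable substitution
`Z_{i,j} ↦ Z_{n+1-j, n+1-i}`. -/
noncomputable def gRNC (k : Type*) [Field k] (n r : ℕ) : MvPolynomial (ℕ × ℕ) k :=
  rename (fun p : ℕ × ℕ => (n + 1 - p.2, n + 1 - p.1)) (fRNC k r)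

/-- The (strict part of the) order on the variables `Z_{i,j}` :
`Z_{i,j} < Z_{i',j'}` iff `i+j < i'+j'`, or `i+j = i'+j'` and `i < i'`. -/
def zord : ℕ × ℕ → ℕ × ℕ → Prop :=
  fun p q => p.1 + p.2 < q.1 + q.2 ∨ (p.1 + p.2 = q.1 + q.2 ∧ p.1 < q.1)

/-- The index set of the variables `z_{i,j}`, `1 ≤ j < i ≤ n`, `i + j ≤ n + 1`,
of the polynomial ring `S`. -/
abbrev SubP (n : ℕ) : ℕ × ℕ → Prop :=
  fun p => 1 ≤ p.2 ∧ p.2 < p.1 ∧ p.1 ≤ n ∧ p.1 + p.2 ≤ n + 1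

namespace RNC14
set_option maxHeartbeats 1000000

variable {k : Type*} [Field k]

/-- weight of the variable `z_{i,j}`: `ψ(c) = 2 (n+2-c)²` where `c = i + j`. -/
def psi (n c : ℕ) : ℕ := 2 * ((n + 2) - c) ^ 2

/-- total weight of a monomial. -/
noncomputable def Wt (n : ℕ) : (Subtype (SubP n) →₀ ℕ) →+ ℕ where
  toFun μ := μ.sum fun p e => e * psi n (p.1.1 + p.1.2)
  map_zero' := Finsupp.sum_zero_index
  map_add' f g := Finsupp.sum_add_index' (f := f) (g := g)
    (h := fun p e => e * psi n (p.1.1 + p.1.2)) (fun _ => zero_mul _)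
    (fun _ _ _ => add_mul _ _ _)

lemma Wt_apply (n : ℕ) (μ : Subtype (SubP n) →₀ ℕ) :
    Wt n μ = μ.sum fun p e => e * psi n (p.1.1 + p.1.2) := rfl

lemma Wt_single (n : ℕ) (p : Subtype (SubP n)) (e : ℕ) :
    Wt n (Finsupp.single p e) = e * psi n (p.1.1 + p.1.2) := by
  rw [Wt_apply]
  exact Finsupp.sum_single_index (zero_mul _)

/-- `M` is the unique monomial of minimal weight in `F`, with nonzero coefficient. -/
def MinAt (n : ℕ) (F : MvPolynomial (Subtype (SubP n)) k) (M : Subtype (SubP n) →₀ ℕ) : Prop :=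
  coeff M F ≠ 0 ∧ ∀ μ ∈ F.support, Wt n M ≤ Wt n μ ∧ (Wt n μ = Wt n M → μ = M)

lemma MinAt.mul {n : ℕ} {F G : MvPolynomial (Subtype (SubP n)) k}
    {M N : Subtype (SubP n) →₀ ℕ} (hF : MinAt n F M) (hG : MinAt n G N) :
    MinAt n (F * G) (M + N) := by
  constructor
  · have hcoeff : coeff (M + N) (F * G) = coeff M F * coeff N G := by
      rw [coeff_mul]
      refine Finset.sum_eq_single_of_mem (M, N) (Finset.HasAntidiagonal.mem_antidiagonal.mpr rfl) ?_
      rintro ⟨x, y⟩ hxy hne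
      by_contra hc
      have hx : x ∈ F.support := by
        rw [mem_support_iff]; intro h; rw [h, zero_mul] at hc; exact hc rfl
      have hy : y ∈ G.support := by
        rw [mem_support_iff]; intro h; rw [h, mul_zero] at hc; exact hc rfl
      have hsum : x + y = M + N := Finset.HasAntidiagonal.mem_antidiagonal.mp hxy
      have hWsum : Wt n x + Wt n y = Wt n M + Wt n N := by
        rw [← map_add, ← map_add, hsum]
      have h1 := hF.2 x hx
      have h2 := hG.2 y hy
      have hx' : Wt n x = Wt n M := by omega
      have hy' : Wt n y = Wt n N := by omega
      exact hne (by rw [h1.2 hx', h2.2 hy'])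
    rw [hcoeff]
    exact mul_ne_zero hF.1 hG.1
  · intro μ hμ
    obtain ⟨x, hx, y, hy, rfl⟩ := Finset.mem_add.mp (support_mul F G hμ)
    have h1 := hF.2 x hx
    have h2 := hG.2 y hy
    rw [map_add, map_add]
    constructor
    · omega
    · intro he
      have hx' : Wt n x = Wt n M := by omega
      have hy' : Wt n y = Wt n N := by omega
      rw [h1.2 hx', h2.2 hy']

lemma minAt_one (n : ℕ) : MinAt n (1 : MvPolynomial (Subtype (SubP n)) k) 0 := by
  constructor
  · simp
  · intro μ hμ
    have : μ = 0 := by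
      by_contra hne
      have := mem_support_iff.mp hμ
      rw [coeff_one, if_neg (fun h => hne h.symm)] at this
      exact this rfl
    subst this
    exact ⟨le_refl _, fun _ => rfl⟩

lemma MinAt.prod {n : ℕ} {ι : Type*} (S : Finset ι)
    (F : ι → MvPolynomial (Subtype (SubP n)) k) (M : ι → Subtype (SubP n) →₀ ℕ)
    (h : ∀ i ∈ S, MinAt n (F i) (M i)) :
    MinAt n (∏ i ∈ S, F i) (∑ i ∈ S, M i) := by
  induction S using Finset.cons_induction with
  | empty => simpa using minAt_one n
  | cons a s ha ih =>
    rw [Finset.prod_cons, Finset.sum_cons]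
    exact (h a (Finset.mem_cons_self a s)).mul
      (ih fun i hi => h i (Finset.mem_cons_of_mem hi))

lemma MinAt.pow {n : ℕ} {F : MvPolynomial (Subtype (SubP n)) k}
    {M : Subtype (SubP n) →₀ ℕ} (h : MinAt n F M) (d : ℕ) :
    MinAt n (F ^ d) (d • M) := by
  have := MinAt.prod (Finset.range d) (fun _ => F) (fun _ => M) (fun i _ => h)
  simpa using this

lemma wtAbove_mul {n : ℕ} {F G : MvPolynomial (Subtype (SubP n)) k} {a b : ℕ}
    (hF : ∀ μ ∈ F.support, a ≤ Wt n μ) (hG : ∀ μ ∈ G.support, b ≤ Wt n μ) :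
    ∀ μ ∈ (F * G).support, a + b ≤ Wt n μ := by
  intro μ hμ
  obtain ⟨x, hx, y, hy, rfl⟩ := Finset.mem_add.mp (support_mul F G hμ)
  rw [map_add]
  exact add_le_add (hF x hx) (hG y hy)

lemma wtAbove_prod {n : ℕ} {ι : Type*} (S : Finset ι)
    (F : ι → MvPolynomial (Subtype (SubP n)) k) (b : ι → ℕ)
    (h : ∀ i ∈ S, ∀ μ ∈ (F i).support, b i ≤ Wt n μ) :
    ∀ μ ∈ (∏ i ∈ S, F i).support, (∑ i ∈ S, b i) ≤ Wt n μ := by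
  induction S using Finset.cons_induction with
  | empty => intro μ _; simp
  | cons a s ha ih =>
    rw [Finset.prod_cons, Finset.sum_cons]
    exact wtAbove_mul (h a (Finset.mem_cons_self a s))
      (ih fun i hi => h i (Finset.mem_cons_of_mem hi))

lemma prod_monomial_one {n : ℕ} {ι : Type*} (S : Finset ι) (g : ι → (Subtype (SubP n) →₀ ℕ)) :
    (∏ i ∈ S, (monomial (g i) (1 : k))) = monomial (∑ i ∈ S, g i) 1 := by
  induction S using Finset.cons_induction with
  | empty => simp
  | cons a s ha ih => rw [Finset.prod_cons, Finset.sum_cons, ih, monomial_mul, one_mul]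

end RNC14
namespace RNC14

lemma psi_cast (n c : ℕ) : (psi n c : ℤ) = 2 * (max ((n : ℤ) + 2 - (c : ℤ)) 0) ^ 2 := by
  have h : ((n + 2 - c : ℕ) : ℤ) = max ((n : ℤ) + 2 - (c : ℤ)) 0 := by
    rcases le_or_gt c (n + 2) with h | h
    · rw [max_eq_left (by omega)]; omega
    · rw [max_eq_right (by omega)]; omega
  simp only [psi]
  rw [Nat.cast_mul, Nat.cast_pow, h]
  norm_num

lemma D_bound (n s c : ℕ) (hsn : s ≤ n) :
    ((psi n (s + 1) : ℤ) - 4 * ((n : ℤ) + 1 - (s : ℤ)) * ((c : ℤ) - ((s : ℤ) + 1))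
        ≤ (psi n c : ℤ))
    ∧ (c ≠ s + 1 →
      (psi n (s + 1) : ℤ) - 4 * ((n : ℤ) + 1 - (s : ℤ)) * ((c : ℤ) - ((s : ℤ) + 1)) + 2
        ≤ (psi n c : ℤ)) := by
  have hcast1 : (psi n (s + 1) : ℤ) = 2 * ((n : ℤ) + 1 - (s : ℤ)) ^ 2 := by
    rw [psi_cast]
    push_cast
    rw [max_eq_left (by omega)]
    ring
  rw [psi_cast n c, hcast1]
  rcases le_or_gt 0 ((n : ℤ) + 2 - (c : ℤ)) with h | h
  · rw [max_eq_left h]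
    constructor
    · nlinarith [sq_nonneg ((s : ℤ) + 1 - (c : ℤ))]
    · intro hc
      have hx : (1 : ℤ) ≤ ((s : ℤ) + 1 - (c : ℤ)) ^ 2 := by
        have hd : (s : ℤ) + 1 - (c : ℤ) ≤ -1 ∨ 1 ≤ (s : ℤ) + 1 - (c : ℤ) := by omega
        rcases hd with hd | hd <;> nlinarith
      nlinarith [hx]
  · rw [max_eq_right (le_of_lt h)]
    have hu1 : (1 : ℤ) ≤ (n : ℤ) + 1 - (s : ℤ) := by omega
    have hcx : (n : ℤ) + 3 ≤ (c : ℤ) := by omega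
    have hkey : (0 : ℤ) ≤ 4 * ((n : ℤ) + 1 - (s : ℤ)) *
        (((c : ℤ) - (s : ℤ) - 1) - (((n : ℤ) + 1 - (s : ℤ)) + 1)) := by
      apply mul_nonneg (by linarith) (by linarith)
    constructor
    · nlinarith [hkey, hu1]
    · intro _
      nlinarith [hkey, hu1]

/-- the "column sum" `i+j` of the `i`-th entry picked by the permutation `σ`. -/
def Cf (s : ℕ) (σ : Equiv.Perm (Fin (s - s / 2))) (i : Fin (s - s / 2)) : ℕ :=
  s / 2 + 1 + (σ i : ℕ) + ((i : ℕ) + 1)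

/-- lower bound for the weight contribution of the `i`-th entry. -/
def Bf (n s : ℕ) (σ : Equiv.Perm (Fin (s - s / 2))) (i : Fin (s - s / 2)) : ℕ :=
  if s / 2 + 1 + (σ i : ℕ) = (i : ℕ) + 1 then 0 else psi n (Cf s σ i)

def Ef (s : ℕ) (σ : Equiv.Perm (Fin (s - s / 2))) (i : Fin (s - s / 2)) : ℤ :=
  if Cf s σ i = s + 1 then 0 else 2

def Uf (n s : ℕ) (σ : Equiv.Perm (Fin (s - s / 2))) (i : Fin (s - s / 2)) : ℤ :=
  if s / 2 + 1 + (σ i : ℕ) = (i : ℕ) + 1 then (psi n (s + 1) : ℤ) else 0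

lemma gauss_int (t : ℕ) : 2 * (∑ i ∈ Finset.range t, (i : ℤ)) = t * (t - 1) := by
  induction t with
  | zero => simp
  | succ t ih =>
    rw [Finset.sum_range_succ]
    push_cast
    push_cast at ih
    ring_nf
    ring_nf at ih
    linarith

lemma arith_core (n s : ℕ) (hs : 1 ≤ s) (hsn : s ≤ n) (σ : Equiv.Perm (Fin (s - s / 2)))
    (hσ : ∀ i : Fin (s - s / 2), (i : ℕ) + 1 ≤ s / 2 + 1 + (σ i : ℕ)) :
    s / 2 * psi n (s + 1) ≤ ∑ i : Fin (s - s / 2), Bf n s σ i ∧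
      ((∑ i : Fin (s - s / 2), Bf n s σ i) = s / 2 * psi n (s + 1) →
        ∀ i : Fin (s - s / 2), Cf s σ i = s + 1) := by
  have htpos : 1 ≤ s - s / 2 := by omega
  have hpoint : ∀ i : Fin (s - s / 2),
      (psi n (s + 1) : ℤ) + Ef s σ i ≤ (Bf n s σ i : ℤ) + Uf n s σ i
        + 4 * ((n : ℤ) + 1 - (s : ℤ)) * ((Cf s σ i : ℤ) - ((s : ℤ) + 1)) := by
    intro i
    have hi1 : (i : ℕ) < s - s / 2 := i.isLt
    have hi2 : (σ i : ℕ) < s - s / 2 := (σ i).isLt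
    by_cases hunit : s / 2 + 1 + (σ i : ℕ) = (i : ℕ) + 1
    · have hci : Cf s σ i = s + 1 := by simp only [Cf]; omega
      have hcz : (Cf s σ i : ℤ) - ((s : ℤ) + 1) = 0 := by rw [hci]; push_cast; ring
      simp only [Ef, Uf, Bf, if_pos hunit, if_pos hci, hcz]
      push_cast
      linarith
    · have hD := D_bound n s (Cf s σ i) hsn
      simp only [Ef, Uf, Bf, if_neg hunit]
      by_cases hci : Cf s σ i = s + 1
      · rw [if_pos hci]
        linarith [hD.1]
      · rw [if_neg hci]
        linarith [hD.2 hci]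
  have hperm : ∑ i : Fin (s - s / 2), ((σ i : ℕ) : ℤ)
      = ∑ i : Fin (s - s / 2), ((i : ℕ) : ℤ) := Equiv.sum_comp σ (fun j => ((j : ℕ) : ℤ))
  have hgauss : 2 * (∑ i : Fin (s - s / 2), ((i : ℕ) : ℤ))
      = ((s - s / 2 : ℕ) : ℤ) * (((s - s / 2 : ℕ) : ℤ) - 1) := by
    rw [Fin.sum_univ_eq_sum_range (fun i => ((i : ℕ) : ℤ)) (s - s / 2)]
    exact gauss_int (s - s / 2)
  have hsumc : ∑ i : Fin (s - s / 2), ((Cf s σ i : ℕ) : ℤ)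
      = ((s - s / 2 : ℕ) : ℤ) * ((s : ℤ) + 1) := by
    have hCf : ∀ i : Fin (s - s / 2), ((Cf s σ i : ℕ) : ℤ)
        = (((s / 2 : ℕ) : ℤ) + 2 + ((σ i : ℕ) : ℤ)) + ((i : ℕ) : ℤ) := by
      intro i; simp only [Cf]; push_cast; ring
    rw [Finset.sum_congr rfl fun i _ => hCf i, Finset.sum_add_distrib,
      Finset.sum_add_distrib, hperm, Finset.sum_const, Finset.card_univ,
      Fintype.card_fin, nsmul_eq_mul]
    have hrts : ((s / 2 : ℕ) : ℤ) + ((s - s / 2 : ℕ) : ℤ) = (s : ℤ) := by omega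
    linear_combination hgauss + ((s - s / 2 : ℕ) : ℤ) * hrts
  have hψ0 : (0 : ℤ) ≤ (psi n (s + 1) : ℤ) := Int.natCast_nonneg _
  have hUsum : ∑ i : Fin (s - s / 2), Uf n s σ i
      ≤ ((s % 2 : ℕ) : ℤ) * (psi n (s + 1) : ℤ) := by
    by_cases hpar : s % 2 = 0
    · have hz : ∀ i : Fin (s - s / 2), Uf n s σ i = 0 := by
        intro i
        simp only [Uf]
        rw [if_neg]
        have := i.isLt
        have := (σ i).isLt
        omega
      rw [Finset.sum_congr rfl fun i _ => hz i, Finset.sum_const_zero, hpar]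
      simp
    · have hodd : s % 2 = 1 := by omega
      have hlt : s / 2 < s - s / 2 := by omega
      have hle : ∀ i : Fin (s - s / 2), Uf n s σ i
          ≤ (if i = (⟨s / 2, hlt⟩ : Fin (s - s / 2)) then (psi n (s + 1) : ℤ) else 0) := by
        intro i
        simp only [Uf]
        by_cases hunit : s / 2 + 1 + (σ i : ℕ) = (i : ℕ) + 1
        · have hival : i = (⟨s / 2, hlt⟩ : Fin (s - s / 2)) := by
            apply Fin.val_injective
            show (i : ℕ) = s / 2
            have := i.isLt
            have := (σ i).isLt
            omega
          rw [if_pos hunit, hival, if_pos rfl]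
        · rw [if_neg hunit]
          split_ifs
          · exact hψ0
          · exact le_refl 0
      have h1 : ∑ i : Fin (s - s / 2), Uf n s σ i
          ≤ ∑ i : Fin (s - s / 2), (if i = (⟨s / 2, hlt⟩ : Fin (s - s / 2))
              then (psi n (s + 1) : ℤ) else 0) :=
        Finset.sum_le_sum fun i _ => hle i
      rw [Finset.sum_ite_eq' Finset.univ _ (fun _ => (psi n (s + 1) : ℤ)),
        if_pos (Finset.mem_univ _)] at h1
      rw [hodd]
      push_cast
      linarith
  have hmain : ((s / 2 : ℕ) : ℤ) * (psi n (s + 1) : ℤ) + ∑ i : Fin (s - s / 2), Ef s σ i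
      ≤ ∑ i : Fin (s - s / 2), (Bf n s σ i : ℤ) := by
    have h1 := Finset.sum_le_sum fun i (_ : i ∈ Finset.univ) => hpoint i
    rw [Finset.sum_add_distrib, Finset.sum_add_distrib, Finset.sum_add_distrib] at h1
    have h4 : ∑ i : Fin (s - s / 2),
        4 * ((n : ℤ) + 1 - (s : ℤ)) * ((Cf s σ i : ℤ) - ((s : ℤ) + 1)) = 0 := by
      rw [← Finset.mul_sum, Finset.sum_sub_distrib, hsumc, Finset.sum_const,
        Finset.card_univ, Fintype.card_fin, nsmul_eq_mul]
      ring
    rw [h4, add_zero, Finset.sum_const, Finset.card_univ, Fintype.card_fin,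
      nsmul_eq_mul] at h1
    have hcast : ((s / 2 : ℕ) : ℤ) * (psi n (s + 1) : ℤ)
        = ((s - s / 2 : ℕ) : ℤ) * (psi n (s + 1) : ℤ)
          - ((s % 2 : ℕ) : ℤ) * (psi n (s + 1) : ℤ) := by
      have : ((s / 2 : ℕ) : ℤ) = ((s - s / 2 : ℕ) : ℤ) - ((s % 2 : ℕ) : ℤ) := by omega
      rw [this]; ring
    linarith [hUsum, h1]
  have hE0 : ∀ j : Fin (s - s / 2), 0 ≤ Ef s σ j := by
    intro j; simp only [Ef]; split_ifs <;> norm_num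
  constructor
  · have h2 : ((s / 2 * psi n (s + 1) : ℕ) : ℤ) ≤ ((∑ i : Fin (s - s / 2), Bf n s σ i : ℕ) : ℤ) := by
      rw [Nat.cast_sum, Nat.cast_mul]
      have h6 := Finset.sum_nonneg fun j (_ : j ∈ Finset.univ) => hE0 j
      generalize hg : ((s / 2 : ℕ) : ℤ) = R at hmain ⊢
      linarith
    exact_mod_cast h2
  · intro heq i
    have heqz : ∑ i : Fin (s - s / 2), (Bf n s σ i : ℤ)
        = ((s / 2 : ℕ) : ℤ) * (psi n (s + 1) : ℤ) := by
      have h3 := congrArg (Nat.cast : ℕ → ℤ) heq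
      rw [Nat.cast_sum, Nat.cast_mul] at h3
      exact h3
    have hEsum : ∑ j : Fin (s - s / 2), Ef s σ j = 0 :=
      le_antisymm (by
        generalize hg : ((s / 2 : ℕ) : ℤ) = R at hmain heqz
        linarith) (Finset.sum_nonneg fun j _ => hE0 j)
    have h5 := (Finset.sum_eq_zero_iff_of_nonneg fun j (_ : j ∈ Finset.univ) => hE0 j).mp
      hEsum i (Finset.mem_univ i)
    simp only [Ef] at h5
    by_contra hne
    rw [if_neg hne] at h5
    norm_num at h5

end RNC14
namespace RNC14

variable {k : Type*} [Field k]

lemma subP_pair (n s q : ℕ) (hs : 1 ≤ s) (hsn : s ≤ n) (hq : q < s / 2) :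
    SubP n (s - q, q + 1) :=
  ⟨by omega, by omega, by omega, by omega⟩

noncomputable def nu (n s q : ℕ) : Subtype (SubP n) →₀ ℕ :=
  if h : SubP n (s - q, q + 1) then Finsupp.single ⟨(s - q, q + 1), h⟩ 1 else 0

noncomputable def Mmin (n s : ℕ) : Subtype (SubP n) →₀ ℕ :=
  ∑ q ∈ Finset.range (s / 2), nu n s q

lemma Wt_Mmin (n s : ℕ) (hs : 1 ≤ s) (hsn : s ≤ n) :
    Wt n (Mmin n s) = s / 2 * psi n (s + 1) := by
  rw [Mmin, map_sum]
  have h : ∀ q ∈ Finset.range (s / 2), Wt n (nu n s q) = psi n (s + 1) := by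
    intro q hq
    have hq' := Finset.mem_range.mp hq
    rw [nu, dif_pos (subP_pair n s q hs hsn hq'), Wt_single]
    show 1 * psi n (s - q + (q + 1)) = psi n (s + 1)
    rw [one_mul]
    congr 1
    omega
  rw [Finset.sum_congr rfl h, Finset.sum_const, Finset.card_range, smul_eq_mul]

lemma zent_phi_bound (n : ℕ)
    (φ : MvPolynomial (ℕ × ℕ) k →ₐ[k] MvPolynomial (Subtype (SubP n)) k)
    (hφ : ∀ (p : ℕ × ℕ) (hp : SubP n p), φ (X p) = X ⟨p, hp⟩)
    (i' j' : ℕ) (hji : j' ≤ i') (hj : 1 ≤ j') (hi : i' ≤ n) :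
    ∀ μ ∈ (φ (Zent k i' j')).support,
      (if i' = j' then 0 else psi n (i' + j')) ≤ Wt n μ := by
  intro μ hμ
  by_cases he : i' = j'
  · rw [if_pos he]; exact Nat.zero_le _
  · rw [if_neg he]
    have hlt : j' < i' := lt_of_le_of_ne hji (Ne.symm he)
    by_cases hc : i' + j' ≤ n + 1
    · have hsub : SubP n (i', j') := ⟨hj, hlt, hi, hc⟩
      rw [Zent, if_neg he, if_pos hlt, hφ _ hsub, support_X, Finset.mem_singleton] at hμ
      subst hμ
      rw [Wt_single]
      show psi n (i' + j') ≤ 1 * psi n (i' + j')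
      rw [one_mul]
    · have h0 : psi n (i' + j') = 0 := by
        simp only [psi]
        have h1 : n + 2 - (i' + j') = 0 := by omega
        rw [h1]
        ring
      rw [h0]
      exact Nat.zero_le _

lemma minor_term_bound (n s : ℕ) (hs : 1 ≤ s) (hsn : s ≤ n)
    (φ : MvPolynomial (ℕ × ℕ) k →ₐ[k] MvPolynomial (Subtype (SubP n)) k)
    (hφ : ∀ (p : ℕ × ℕ) (hp : SubP n p), φ (X p) = X ⟨p, hp⟩)
    (σ : Equiv.Perm (Fin (s - s / 2))) :
    ∀ μ ∈ (φ (∏ i : Fin (s - s / 2),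
        Zent k (s / 2 + 1 + (σ i : ℕ)) ((i : ℕ) + 1))).support,
      s / 2 * psi n (s + 1) ≤ Wt n μ ∧
        (Wt n μ = s / 2 * psi n (s + 1) → σ = Fin.revPerm) := by
  by_cases hσ : ∀ i : Fin (s - s / 2), (i : ℕ) + 1 ≤ s / 2 + 1 + (σ i : ℕ)
  case neg =>
    push_neg at hσ
    obtain ⟨i, hi⟩ := hσ
    have hz : Zent k (s / 2 + 1 + (σ i : ℕ)) ((i : ℕ) + 1) = 0 := by
      rw [Zent, if_neg (by omega), if_neg (by omega)]
    have hzero : (∏ i : Fin (s - s / 2),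
        Zent k (s / 2 + 1 + (σ i : ℕ)) ((i : ℕ) + 1)) = 0 :=
      Finset.prod_eq_zero (Finset.mem_univ i) hz
    rw [hzero, map_zero]
    intro μ hμ
    simp at hμ
  case pos =>
    intro μ hμ
    rw [map_prod] at hμ
    have hbound := wtAbove_prod Finset.univ
      (fun i => φ (Zent k (s / 2 + 1 + (σ i : ℕ)) ((i : ℕ) + 1))) (Bf n s σ)
      (fun i _ => by
        have h2 : (σ i : ℕ) < s - s / 2 := (σ i).isLt
        simpa only [Bf, Cf] using
          zent_phi_bound n φ hφ (s / 2 + 1 + (σ i : ℕ)) ((i : ℕ) + 1)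
            (hσ i) (by omega) (by omega))
      μ hμ
    have harith := arith_core n s hs hsn σ hσ
    refine ⟨le_trans harith.1 hbound, fun he => ?_⟩
    have heq : ∑ i : Fin (s - s / 2), Bf n s σ i = s / 2 * psi n (s + 1) :=
      le_antisymm (by omega) harith.1
    apply Equiv.ext
    intro i
    have h1 := harith.2 heq i
    simp only [Cf] at h1
    apply Fin.val_injective
    have h3 : ((Fin.revPerm i : Fin (s - s / 2)) : ℕ) = s - s / 2 - ((i : ℕ) + 1) := by
      rw [Fin.revPerm_apply, Fin.val_rev]
    rw [h3]
    have := i.isLt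
    omega

lemma minor_term_rev (n s : ℕ) (hs : 1 ≤ s) (hsn : s ≤ n)
    (φ : MvPolynomial (ℕ × ℕ) k →ₐ[k] MvPolynomial (Subtype (SubP n)) k)
    (hφ : ∀ (p : ℕ × ℕ) (hp : SubP n p), φ (X p) = X ⟨p, hp⟩) :
    φ (∏ i : Fin (s - s / 2),
        Zent k (s / 2 + 1 + ((Fin.revPerm i : Fin (s - s / 2)) : ℕ)) ((i : ℕ) + 1))
      = monomial (Mmin n s) 1 := by
  rw [map_prod]
  have hfac : ∀ i : Fin (s - s / 2),
      φ (Zent k (s / 2 + 1 + ((Fin.revPerm i : Fin (s - s / 2)) : ℕ)) ((i : ℕ) + 1))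
        = monomial (nu n s (i : ℕ)) (1 : k) := by
    intro i
    have hit : (i : ℕ) < s - s / 2 := i.isLt
    have hrow : s / 2 + 1 + ((Fin.revPerm i : Fin (s - s / 2)) : ℕ) = s - (i : ℕ) := by
      rw [Fin.revPerm_apply, Fin.val_rev]
      omega
    rw [hrow]
    by_cases hir : (i : ℕ) < s / 2
    · have hsub : SubP n (s - (i : ℕ), (i : ℕ) + 1) := subP_pair n s (i : ℕ) hs hsn hir
      rw [Zent, if_neg (by omega), if_pos (by omega), hφ _ hsub, nu, dif_pos hsub]
      rfl
    · have hieq : s - (i : ℕ) = (i : ℕ) + 1 := by omega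
      rw [Zent, if_pos hieq, nu, dif_neg (fun hcon => by
        obtain ⟨_, hlt, _, _⟩ := hcon
        omega)]
      rw [map_one]
      simp
  rw [Finset.prod_congr rfl fun i _ => hfac i, prod_monomial_one]
  congr 1
  rw [Fin.sum_univ_eq_sum_range (fun q => nu n s q) (s - s / 2)]
  rcases (by omega : s - s / 2 = s / 2 ∨ s - s / 2 = s / 2 + 1) with hpar | hpar
  · rw [hpar]; rfl
  · rw [hpar, Finset.sum_range_succ]
    have h0 : nu n s (s / 2) = 0 := by
      rw [nu, dif_neg]
      intro hcon
      obtain ⟨_, hlt, _, _⟩ := hcon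
      omega
    rw [h0, add_zero]
    rfl

lemma minAt_minor (n s : ℕ) (hs : 1 ≤ s) (hsn : s ≤ n)
    (φ : MvPolynomial (ℕ × ℕ) k →ₐ[k] MvPolynomial (Subtype (SubP n)) k)
    (hφ : ∀ (p : ℕ × ℕ) (hp : SubP n p), φ (X p) = X ⟨p, hp⟩) :
    MinAt n (φ (vminor k (fun p : Fin (s - s / 2) => s / 2 + 1 + (p : ℕ)))) (Mmin n s) := by
  have hdet : φ (vminor k (fun p : Fin (s - s / 2) => s / 2 + 1 + (p : ℕ)))
      = ∑ σ : Equiv.Perm (Fin (s - s / 2)), ((Equiv.Perm.sign σ : ℤ)) •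
          φ (∏ i : Fin (s - s / 2), Zent k (s / 2 + 1 + (σ i : ℕ)) ((i : ℕ) + 1)) := by
    rw [vminor, Matrix.det_apply, map_sum]
    refine Finset.sum_congr rfl fun σ _ => ?_
    rw [Units.smul_def, map_zsmul]
    rfl
  have hcoeffs : ∀ σ : Equiv.Perm (Fin (s - s / 2)), σ ≠ Fin.revPerm →
      coeff (Mmin n s)
        (φ (∏ i : Fin (s - s / 2), Zent k (s / 2 + 1 + (σ i : ℕ)) ((i : ℕ) + 1))) = 0 := by
    intro σ hne
    by_contra hcon
    have hmem := mem_support_iff.mpr hcon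
    have hb := minor_term_bound n s hs hsn φ hφ σ _ hmem
    exact hne (hb.2 (Wt_Mmin n s hs hsn))
  constructor
  · have hsum : ∑ σ ∈ (Finset.univ : Finset (Equiv.Perm (Fin (s - s / 2)))),
        coeff (Mmin n s) (((Equiv.Perm.sign σ : ℤ)) •
          φ (∏ i : Fin (s - s / 2), Zent k (s / 2 + 1 + (σ i : ℕ)) ((i : ℕ) + 1)))
        = coeff (Mmin n s) (((Equiv.Perm.sign (Fin.revPerm : Equiv.Perm (Fin (s - s / 2))) : ℤ)) •
          φ (∏ i : Fin (s - s / 2),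
            Zent k (s / 2 + 1 + ((Fin.revPerm i : Fin (s - s / 2)) : ℕ)) ((i : ℕ) + 1))) :=
      Finset.sum_eq_single_of_mem _ (Finset.mem_univ _)
        (fun σ _ hne => by rw [coeff_smul, hcoeffs σ hne, smul_zero])
    rw [hdet, coeff_sum, hsum, coeff_smul, minor_term_rev n s hs hsn φ hφ,
      coeff_monomial, if_pos rfl]
    rcases Int.units_eq_one_or
        (Equiv.Perm.sign (Fin.revPerm : Equiv.Perm (Fin (s - s / 2)))) with h | h <;>
      rw [h] <;> simp
  · intro μ hμ
    rw [hdet] at hμ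
    have hex : ∃ σ : Equiv.Perm (Fin (s - s / 2)),
        μ ∈ (φ (∏ i : Fin (s - s / 2),
          Zent k (s / 2 + 1 + (σ i : ℕ)) ((i : ℕ) + 1))).support := by
      by_contra hno
      push_neg at hno
      have h0 : coeff μ (∑ σ : Equiv.Perm (Fin (s - s / 2)), ((Equiv.Perm.sign σ : ℤ)) •
          φ (∏ i : Fin (s - s / 2), Zent k (s / 2 + 1 + (σ i : ℕ)) ((i : ℕ) + 1))) = 0 := by
        rw [coeff_sum]
        refine Finset.sum_eq_zero fun σ _ => ?_
        have h1 : coeff μ (φ (∏ i : Fin (s - s / 2),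
            Zent k (s / 2 + 1 + (σ i : ℕ)) ((i : ℕ) + 1))) = 0 := by
          by_contra hcc
          exact (hno σ) (mem_support_iff.mpr hcc)
        rw [coeff_smul, h1, smul_zero]
      exact mem_support_iff.mp hμ h0
    obtain ⟨σ, hmem⟩ := hex
    have hb := minor_term_bound n s hs hsn φ hφ σ μ hmem
    rw [Wt_Mmin n s hs hsn]
    refine ⟨hb.1, fun he => ?_⟩
    have hrev := hb.2 he
    subst hrev
    classical
    rw [minor_term_rev n s hs hsn φ hφ, support_monomial] at hmem
    simpa using hmem

end RNC14
namespace RNC14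

variable {k : Type*} [Field k]

lemma minAt_f (n : ℕ)
    (φ : MvPolynomial (ℕ × ℕ) k →ₐ[k] MvPolynomial (Subtype (SubP n)) k)
    (hφ : ∀ (p : ℕ × ℕ) (hp : SubP n p), φ (X p) = X ⟨p, hp⟩) :
    MinAt n (φ (fRNC k n)) (∑ s ∈ Finset.Icc 1 n, Mmin n s) := by
  rw [fRNC, map_prod]
  exact MinAt.prod _ _ _ fun s hsmem =>
    minAt_minor n s (Finset.mem_Icc.mp hsmem).1 (Finset.mem_Icc.mp hsmem).2 φ hφ

lemma sum_Mmin (n : ℕ) :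
    ∑ s ∈ Finset.Icc 1 n, Mmin n s
      = ∑ p ∈ (Finset.range (n + 1) ×ˢ Finset.range (n + 1)).subtype (SubP n),
          Finsupp.single p 1 := by
  simp only [Mmin]
  rw [Finset.sum_sigma' (Finset.Icc 1 n) (fun s => Finset.range (s / 2)) (fun s q => nu n s q)]
  refine Finset.sum_bij'
    (fun (x : Σ _ : ℕ, ℕ) (hx : x ∈ (Finset.Icc 1 n).sigma fun s => Finset.range (s / 2)) =>
      (⟨(x.1 - x.2, x.2 + 1), by
        have h1 := Finset.mem_sigma.mp hx
        have h2 := Finset.mem_Icc.mp h1.1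
        have h3 := Finset.mem_range.mp h1.2
        exact ⟨by omega, by omega, by omega, by omega⟩⟩ : Subtype (SubP n)))
    (fun p _ => ⟨p.1.1 + p.1.2 - 1, p.1.2 - 1⟩)
    (fun x hx => by
      have h1 := Finset.mem_sigma.mp hx
      have h2 := Finset.mem_Icc.mp h1.1
      have h3 := Finset.mem_range.mp h1.2
      simp only [Finset.mem_subtype, Finset.mem_product, Finset.mem_range]
      exact ⟨by omega, by omega⟩)
    (fun p hp => by
      obtain ⟨h1, h2, h3, h4⟩ := p.2
      simp only [Finset.mem_sigma, Finset.mem_Icc, Finset.mem_range]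
      refine ⟨⟨by omega, by omega⟩, by omega⟩)
    (fun x hx => by
      have h1 := Finset.mem_sigma.mp hx
      have h2 := Finset.mem_Icc.mp h1.1
      have h3 := Finset.mem_range.mp h1.2
      refine Sigma.ext ?_ ?_
      · show x.1 - x.2 + (x.2 + 1) - 1 = x.1
        omega
      · exact heq_of_eq (show x.2 + 1 - 1 = x.2 by omega))
    (fun p hp => by
      rcases p with ⟨⟨a, b⟩, hsp⟩
      obtain ⟨h1, h2, h3, h4⟩ := hsp
      apply Subtype.ext
      show (a + b - 1 - (b - 1), (b - 1) + 1) = (a, b)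
      have ha : a + b - 1 - (b - 1) = a := by omega
      have hb : b - 1 + 1 = b := by omega
      rw [ha, hb])
    (fun x hx => by
      have h1 := Finset.mem_sigma.mp hx
      have h2 := Finset.mem_Icc.mp h1.1
      have h3 := Finset.mem_range.mp h1.2
      have hsub : SubP n (x.1 - x.2, x.2 + 1) :=
        ⟨by omega, by omega, by omega, by omega⟩
      rw [nu, dif_pos hsub])

end RNC14

theorem stmt14 (k : Type*) [Field k] (m : ℕ) (hm : 1 ≤ m)
    (φ : MvPolynomial (ℕ × ℕ) k →ₐ[k] MvPolynomial (Subtype (SubP (2 * m))) k)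
    (hφ : ∀ (p : ℕ × ℕ) (hp : SubP (2 * m) p), φ (X p) = X ⟨p, hp⟩)
    (d : ℕ) (hd : 0 < d) :
    MvPolynomial.coeff
      (∑ p ∈ (Finset.range (2 * m + 1) ×ˢ Finset.range (2 * m + 1)).subtype (SubP (2 * m)),
        Finsupp.single p d)
      (φ (fRNC k (2 * m)) ^ d) ≠ 0 := by
  have h1 := RNC14.minAt_f (2 * m) φ hφ
  have h2 := h1.pow d
  have h3 : (∑ p ∈ (Finset.range (2 * m + 1) ×ˢ Finset.range (2 * m + 1)).subtype
        (SubP (2 * m)), Finsupp.single p d)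
      = d • ∑ s ∈ Finset.Icc 1 (2 * m), RNC14.Mmin (2 * m) s := by
    rw [RNC14.sum_Mmin (2 * m), Finset.smul_sum]
    refine Finset.sum_congr rfl fun p _ => ?_
    rw [Finsupp.smul_single, smul_eq_mul, mul_one]
  rw [h3]
  exact h2.1
end

section
/- For each s = 1,…,n−1 let a^{(s)} = (a^{(s)}_1 < ⋯ < a^{(s)}_s) be an increasing sequence of length s in {1,…,n}. Then the product ∏_{s=1}^{n−1} det N_{⌊s/2⌋,⌈s/2⌉}(g, h; a^{(s)}), computed for the generic matrices g and h over P, lies in the ideal power D^{e(n)}, where e(n) = (n−1)²/4 if n is odd and e(n) = (n²−2n)/4 if n is even. -/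
open MvPolynomial

/-- The `(i+j) × (i+j)` matrix `N_{i,j}(g,h;a)` whose `(s,t)` entry is `g (a s) t`
for `t < i` (0-based) and `h (a s) (t - i)` for `i ≤ t < i + j`.  (Out-of-range
column indices, which never occur when `i + j ≤ n`, give junk value `0`.) -/
def Nmat {R : Type*} [CommRing R] {n : ℕ} (i j : ℕ)
    (g h : Matrix (Fin n) (Fin n) R) (a : Fin (i + j) → Fin n) :
    Matrix (Fin (i + j)) (Fin (i + j)) R :=
  Matrix.of fun s t =>
    if (t : ℕ) < i then
      (if hi : (t : ℕ) < n then g (a s) ⟨t, hi⟩ else 0)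
    else
      (if hj : (t : ℕ) - i < n then h (a s) ⟨(t : ℕ) - i, hj⟩ else 0)

/-- The minor `m(g;b)` of `g` with rows `b` and columns `1, …, s` (1-based), i.e.
columns `0, …, s-1` (0-based).  (Out-of-range column indices, which never occur
when `s ≤ n`, give junk value `0`.) -/
def minorM {R : Type*} [CommRing R] {n s : ℕ}
    (g : Matrix (Fin n) (Fin n) R) (b : Fin s → Fin n) : R :=
  (Matrix.of fun p q : Fin s =>
    if hq : (q : ℕ) < n then g (b p) ⟨q, hq⟩ else 0).det

lemma prod_mem_pow_sum {R : Type*} [CommRing R] (I : Ideal R) {α : Type*} [DecidableEq α]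
    (S : Finset α) (f : α → R) (m : α → ℕ) (h : ∀ x ∈ S, f x ∈ I ^ m x) :
    ∏ x ∈ S, f x ∈ I ^ ∑ x ∈ S, m x := by
  induction S using Finset.induction with
  | empty => simp
  | @insert x S hx ih =>
    rw [Finset.prod_insert hx, Finset.sum_insert hx, pow_add]
    exact Ideal.mul_mem_mul (h _ (Finset.mem_insert_self _ _))
      (ih fun y hy => h y (Finset.mem_insert_of_mem hy))

lemma det_mem_pow_card {R : Type*} [CommRing R] {m : ℕ} (M : Matrix (Fin m) (Fin m) R)
    (I : Ideal R) (S : Finset (Fin m)) (hM : ∀ q ∈ S, ∀ p, M p q ∈ I) :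
    M.det ∈ I ^ S.card := by
  rw [Matrix.det_apply]
  refine Ideal.sum_mem _ fun σ _ => ?_
  rw [Units.smul_def, zsmul_eq_mul]
  refine Ideal.mul_mem_left _ _ ?_
  rw [← Finset.prod_sdiff (Finset.subset_univ S)]
  refine Ideal.mul_mem_left _ _ ?_
  have hc : S.card = ∑ _x ∈ S, 1 := by simp
  rw [hc]
  exact prod_mem_pow_sum I S _ _ (fun x hx => by simpa using hM x hx (σ x))

lemma det_Nmat_mem {R : Type*} [CommRing R] {n : ℕ} (i j : ℕ) (hij : i ≤ j)
    (g h : Matrix (Fin n) (Fin n) R) (a : Fin (i + j) → Fin n) (I : Ideal R)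
    (hgh : ∀ p q, h p q - g p q ∈ I) :
    (Nmat i j g h a).det ∈ I ^ i := by
  set N := Nmat i j g h a with hN
  set B : Matrix (Fin (i + j)) (Fin (i + j)) R := Matrix.of fun p q =>
    if i ≤ (q : ℕ) ∧ (q : ℕ) < 2 * i then
      N p q - N p ⟨(q : ℕ) - i, lt_of_le_of_lt (Nat.sub_le _ _) q.isLt⟩
    else N p q with hB
  set E : Matrix (Fin (i + j)) (Fin (i + j)) R := Matrix.of fun u v =>
    if u = v then 1 else if (v : ℕ) = i + (u : ℕ) ∧ (u : ℕ) < i then 1 else 0 with hE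
  have hdetE : E.det = 1 := by
    rw [Matrix.det_of_upperTriangular]
    · simp [hE]
    · intro u v huv
      have huv' : (v : ℕ) < (u : ℕ) := huv
      have h1 : u ≠ v := by intro h; subst h; omega
      have h2 : ¬((v : ℕ) = i + (u : ℕ) ∧ (u : ℕ) < i) := by rintro ⟨hv, -⟩; omega
      simp [hE, h1, h2]
  have hNBE : N = B * E := by
    ext p t
    rw [Matrix.mul_apply]
    by_cases ht : i ≤ (t : ℕ) ∧ (t : ℕ) < 2 * i
    · have hi0 : 0 < i := by omega
      have hu₀lt : (t : ℕ) - i < i + j := lt_of_le_of_lt (Nat.sub_le _ _) t.isLt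
      set u₀ : Fin (i + j) := ⟨(t : ℕ) - i, hu₀lt⟩ with hu₀
      have hval : (u₀ : ℕ) = (t : ℕ) - i := rfl
      have hne : u₀ ≠ t := by
        refine Fin.ne_of_val_ne ?_
        rw [hval]; omega
      have hsub : ∑ u : Fin (i + j), B p u * E u t
          = ∑ u ∈ ({u₀, t} : Finset (Fin (i + j))), B p u * E u t := by
        refine (Finset.sum_subset (Finset.subset_univ _) ?_).symm
        intro u _ hu
        simp only [Finset.mem_insert, Finset.mem_singleton, not_or] at hu
        have hEzero : E u t = 0 := by
          simp only [hE, Matrix.of_apply]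
          rw [if_neg hu.2, if_neg]
          rintro ⟨h1, h2⟩
          exact hu.1 (Fin.ext (by rw [hval]; omega))
        rw [hEzero, mul_zero]
      rw [hsub, Finset.sum_pair hne]
      have hEu₀ : E u₀ t = 1 := by
        simp only [hE, Matrix.of_apply]
        rw [if_neg hne, if_pos]
        exact ⟨by omega, by omega⟩
      have hEt : E t t = 1 := by simp [hE]
      have hBu₀ : B p u₀ = N p u₀ := by
        simp only [hB, Matrix.of_apply]
        rw [if_neg]
        rintro ⟨h1, -⟩
        omega
      have hBt : B p t = N p t - N p ⟨(t : ℕ) - i, hu₀lt⟩ := by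
        simp only [hB, Matrix.of_apply]
        rw [if_pos ht]
      rw [hEu₀, hEt, hBu₀, hBt, hu₀]
      ring
    · rw [Finset.sum_eq_single_of_mem t (Finset.mem_univ _)]
      · have hBt : B p t = N p t := by
          simp only [hB, Matrix.of_apply]
          rw [if_neg ht]
        have hEt : E t t = 1 := by simp [hE]
        rw [hBt, hEt, mul_one]
      · intro u _ hu
        have hEzero : E u t = 0 := by
          simp only [hE, Matrix.of_apply]
          rw [if_neg hu, if_neg]
          rintro ⟨h1, h2⟩
          omega
        rw [hEzero, mul_zero]
  rw [hNBE, Matrix.det_mul, hdetE, mul_one]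
  have hcard : (Finset.univ.filter fun q : Fin (i + j) => i ≤ (q : ℕ) ∧ (q : ℕ) < 2 * i).card = i := by
    rw [← Finset.card_image_of_injective _ Fin.val_injective]
    have himg : (Finset.univ.filter fun q : Fin (i + j) => i ≤ (q : ℕ) ∧ (q : ℕ) < 2 * i).image Fin.val
        = Finset.Ico i (2 * i) := by
      ext x
      simp only [Finset.mem_image, Finset.mem_filter, Finset.mem_univ, true_and, Finset.mem_Ico]
      constructor
      · rintro ⟨q, hq, rfl⟩; exact hq
      · rintro ⟨h1, h2⟩
        exact ⟨⟨x, by omega⟩, ⟨h1, h2⟩, rfl⟩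
    rw [himg, Nat.card_Ico]
    omega
  have hmem := det_mem_pow_card B I
    (Finset.univ.filter fun q : Fin (i + j) => i ≤ (q : ℕ) ∧ (q : ℕ) < 2 * i) ?_
  · rwa [hcard] at hmem
  · intro q hq p
    rw [Finset.mem_filter] at hq
    obtain ⟨-, hq1, hq2⟩ := hq
    have hBq : B p q = N p q - N p ⟨(q : ℕ) - i, lt_of_le_of_lt (Nat.sub_le _ _) q.isLt⟩ := by
      simp only [hB, Matrix.of_apply]
      rw [if_pos ⟨hq1, hq2⟩]
    rw [hBq]
    have e1 : N p q = if hqn : (q : ℕ) - i < n then h (a p) ⟨(q : ℕ) - i, hqn⟩ else 0 := by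
      simp only [hN, Nmat, Matrix.of_apply]
      rw [if_neg (show ¬ (q : ℕ) < i by omega)]
    have e2 : N p ⟨(q : ℕ) - i, lt_of_le_of_lt (Nat.sub_le _ _) q.isLt⟩
        = if hqn : (q : ℕ) - i < n then g (a p) ⟨(q : ℕ) - i, hqn⟩ else 0 := by
      simp only [hN, Nmat, Matrix.of_apply]
      rw [if_pos (show (q : ℕ) - i < i by omega)]
    rw [e1, e2]
    by_cases hqn : (q : ℕ) - i < n
    · rw [dif_pos hqn, dif_pos hqn]
      exact hgh _ _
    · rw [dif_neg hqn, dif_neg hqn]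
      simp

lemma sum_halves (m : ℕ) : ∑ s ∈ Finset.Icc 1 m, s / 2 = m * m / 4 := by
  induction m with
  | zero => simp
  | succ m ih =>
    rw [Finset.sum_Icc_succ_top (by omega : 1 ≤ m + 1), ih]
    rcases Nat.even_or_odd m with ⟨q, hq⟩ | ⟨q, hq⟩
    · subst hq
      have h1 : (q + q) * (q + q) = 4 * (q * q) := by ring
      have h2 : (q + q + 1) * (q + q + 1) = 4 * (q * q) + 4 * q + 1 := by ring
      rw [h1, h2]
      generalize q * q = Q
      omega
    · subst hq
      have h1 : (2 * q + 1) * (2 * q + 1) = 4 * (q * q) + 4 * q + 1 := by ring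
      have h2 : (2 * q + 1 + 1) * (2 * q + 1 + 1) = 4 * (q * q) + 8 * q + 4 := by ring
      rw [h1, h2]
      generalize q * q = Q
      omega

lemma exp_eq (n : ℕ) (hn : 2 ≤ n) :
    (if n % 2 = 0 then (n ^ 2 - 2 * n) / 4 else (n - 1) ^ 2 / 4) = (n - 1) * (n - 1) / 4 := by
  rcases Nat.even_or_odd n with ⟨q, hq⟩ | ⟨q, hq⟩
  · subst hq
    rw [if_pos (by omega)]
    have h1 : (q + q) ^ 2 = 4 * (q * q) := by ring
    have h2 : 1 ≤ q := by omega
    have h3 : (q + q - 1) * (q + q - 1) = 4 * (q * q) - 4 * q + 1 := by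
      cases q with
      | zero => omega
      | succ p => have hp : p + 1 + (p + 1) - 1 = 2 * p + 1 := by omega
                  rw [hp]; have hpp : (p+1)*(p+1) = p*p + 2*p + 1 := by ring
                  rw [hpp]; ring_nf; omega
    rw [h1, h3]
    generalize q * q = Q
    omega
  · subst hq
    rw [if_neg (by omega)]
    have h0 : 2 * q + 1 - 1 = 2 * q := by omega
    rw [h0]
    have h1 : (2 * q) ^ 2 = (2 * q) * (2 * q) := by ring
    rw [h1]

theorem stmt15 (k : Type*) [Field k] (n : ℕ) (hn : 2 ≤ n)
    (a : (s : ℕ) → Fin (s / 2 + (s - s / 2)) → Fin n)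
    (ha : ∀ s ∈ Finset.Icc 1 (n - 1), StrictMono (a s)) :
    (∏ s ∈ Finset.Icc 1 (n - 1),
      (Nmat (s / 2) (s - s / 2)
        (Matrix.of fun s t : Fin n =>
          (X (Sum.inl (s, t)) : MvPolynomial ((Fin n × Fin n) ⊕ (Fin n × Fin n)) k))
        (Matrix.of fun s t : Fin n => X (Sum.inr (s, t))) (a s)).det) ∈
      (Ideal.span (Set.range fun p : Fin n × Fin n =>
        (X (Sum.inl p) - X (Sum.inr p) :
          MvPolynomial ((Fin n × Fin n) ⊕ (Fin n × Fin n)) k))) ^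
        (if n % 2 = 0 then (n ^ 2 - 2 * n) / 4 else (n - 1) ^ 2 / 4) := by
  set D : Ideal (MvPolynomial ((Fin n × Fin n) ⊕ (Fin n × Fin n)) k) :=
    Ideal.span (Set.range fun p : Fin n × Fin n =>
      (X (Sum.inl p) - X (Sum.inr p) :
        MvPolynomial ((Fin n × Fin n) ⊕ (Fin n × Fin n)) k)) with hD
  have key : ∀ s ∈ Finset.Icc 1 (n - 1),
      (Nmat (s / 2) (s - s / 2)
        (Matrix.of fun s t : Fin n =>
          (X (Sum.inl (s, t)) : MvPolynomial ((Fin n × Fin n) ⊕ (Fin n × Fin n)) k))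
        (Matrix.of fun s t : Fin n => X (Sum.inr (s, t))) (a s)).det ∈ D ^ (s / 2) := by
    intro s _
    refine det_Nmat_mem _ _ (by omega) _ _ _ _ ?_
    intro p q
    simp only [Matrix.of_apply]
    have : (X (Sum.inr (p, q)) : MvPolynomial ((Fin n × Fin n) ⊕ (Fin n × Fin n)) k)
        - X (Sum.inl (p, q))
        = -((fun p : Fin n × Fin n => (X (Sum.inl p) - X (Sum.inr p) :
            MvPolynomial ((Fin n × Fin n) ⊕ (Fin n × Fin n)) k)) (p, q)) := by
      ring
    rw [this]
    exact neg_mem (Ideal.subset_span ⟨(p, q), rfl⟩)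
  have hprod := prod_mem_pow_sum D (Finset.Icc 1 (n - 1)) _ (fun s => s / 2) key
  rw [sum_halves] at hprod
  rw [exp_eq n hn]
  exact hprod
end
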